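/- Let (G_n) be a sequence of compact abelian groups, 𝒰 a nonprincipal ultrafilter on ℕ, and for each n let χ_n : G_n → S¹ be a continuous character. Define χ : ∏_{n→𝒰} G_n → S¹ by χ(𝐱) = lim_{n→𝒰} χ_n(x_n). Then χ is the trivial character (identically 1) if and only if χ_n is trivial for 𝒰-many n. -/

import Mathlib

open Filter

lemma circle_pow_re_nonpos (z : Circle) (hz : z ≠ 1) :
    ∃ k : ℕ, (((z : ℂ)) ^ k).re ≤ 0 := by
  have habs : ‖(z : ℂ)‖ = 1 := Circle.norm_coe z
  set θ := Complex.arg (z : ℂ) with hθ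
  have hθ0 : θ ≠ 0 := by
    intro h
    apply hz
    apply Circle.coe_injective
    have := Complex.arg_eq_zero_iff.1 h
    have him : (z : ℂ).im = 0 := this.2
    have hre : 0 ≤ (z : ℂ).re := this.1
    have : ‖(z : ℂ)‖ = (z : ℂ).re := by
      rw [Complex.norm_def, Complex.normSq_apply, him]
      rw [mul_zero, add_zero, ← sq]
      rw [Real.sqrt_sq hre]
    rw [habs] at this
    rw [Circle.coe_one]
    exact Complex.ext (by rw [← this]; simp) (by simp [him])
  set t := |θ| with ht
  have ht0 : 0 < t := abs_pos.2 hθ0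
  have htπ : t ≤ Real.pi := abs_le.2 ⟨(Complex.neg_pi_lt_arg _).le, Complex.arg_le_pi _⟩
  set k := ⌈Real.pi / (2 * t)⌉₊ with hk
  refine ⟨k, ?_⟩
  have hzexp : (z : ℂ) = Complex.exp (θ * Complex.I) := by
    conv_lhs => rw [← Complex.norm_mul_exp_arg_mul_I (z : ℂ)]
    rw [habs, ← hθ]; simp
  have hpow : ((z : ℂ)) ^ k = Complex.exp ((k * θ : ℝ) * Complex.I) := by
    rw [hzexp, ← Complex.exp_nat_mul]
    push_cast
    ring_nf
  rw [hpow, Complex.exp_ofReal_mul_I_re]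
  rw [← Real.cos_abs]
  have hkt : |(k : ℝ) * θ| = k * t := by rw [abs_mul, Nat.abs_cast, ht]
  rw [hkt]
  apply Real.cos_nonpos_of_pi_div_two_le_of_le
  · have h1 : Real.pi / (2 * t) ≤ k := Nat.le_ceil _
    calc Real.pi / 2 = (Real.pi / (2 * t)) * t := by field_simp
    _ ≤ k * t := by apply mul_le_mul_of_nonneg_right h1 ht0.le
  · have h2 : (k : ℝ) < Real.pi / (2 * t) + 1 :=
      Nat.ceil_lt_add_one (by positivity)
    have : (k : ℝ) * t < (Real.pi / (2 * t) + 1) * t :=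
      mul_lt_mul_of_pos_right h2 ht0
    have heq : (Real.pi / (2 * t) + 1) * t = Real.pi / 2 + t := by field_simp
    rw [heq] at this
    linarith


/-- the ultralimit `χ` of continuous characters `χₙ : Gₙ → S¹` of compact
abelian groups, defined on the ultraproduct `∏_{n→𝒰} Gₙ`, is the trivial character if and
only if `χₙ` is trivial for `𝒰`-many `n`.  (`𝒰` is a nonprincipal ultrafilter on `ℕ`.) -/
theorem ultralimit_character_trivial_iff
    (𝒰 : Ultrafilter ℕ) (h𝒰 : (𝒰 : Filter ℕ) ≤ Filter.cofinite)
    (G : ℕ → Type*) [∀ n, AddCommGroup (G n)] [∀ n, TopologicalSpace (G n)]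
    [∀ n, CompactSpace (G n)] [∀ n, IsTopologicalAddGroup (G n)]
    (χ : ∀ n, G n → Circle)
    (hχcont : ∀ n, Continuous (χ n))
    (hχhom : ∀ n, ∀ a b : G n, χ n (a + b) = χ n a * χ n b)
    (χlim : Filter.Product (𝒰 : Filter ℕ) G → Circle)
    (hχlim : ∀ x : ∀ n, G n,
      Filter.Tendsto (fun n => χ n (x n)) (𝒰 : Filter ℕ)
        (nhds (χlim (Quotient.mk (Filter.productSetoid (𝒰 : Filter ℕ) G) x)))) :
    (∀ q, χlim q = 1) ↔ (∀ᶠ n in (𝒰 : Filter ℕ), ∀ a : G n, χ n a = 1) := by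
  have hmap0 : ∀ n, χ n 0 = 1 := by
    intro n
    have := hχhom n 0 0
    rw [add_zero] at this
    exact right_eq_mul.1 this
  have hmappow : ∀ n (a : G n) (k : ℕ), χ n (k • a) = (χ n a) ^ k := by
    intro n a k
    induction k with
    | zero => simpa using hmap0 n
    | succ m ih => rw [succ_nsmul, hχhom, ih, pow_succ]
  classical
  constructor
  · intro h
    by_contra hc
    set P : ℕ → Prop := fun n => ∃ a : G n, ((χ n a : ℂ)).re ≤ 0 with hP
    set x : ∀ n, G n := fun n => if hn : P n then hn.choose else 0 with hx
    have hmem : {n | ¬ ∀ a : G n, χ n a = 1} ∈ 𝒰 := by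
      rw [Filter.eventually_iff] at hc
      exact Ultrafilter.compl_mem_iff_notMem.2 hc
    have hxle : ∀ᶠ n in (𝒰 : Filter ℕ), ((χ n (x n) : ℂ)).re ≤ 0 := by
      filter_upwards [hmem] with n hn
      push_neg at hn
      obtain ⟨a, ha⟩ := hn
      obtain ⟨k, hk⟩ := circle_pow_re_nonpos (χ n a) ha
      have hPn : P n := ⟨k • a, by rw [hmappow]; push_cast; exact hk⟩
      simp only [hx, dif_pos hPn]
      exact hPn.choose_spec
    have htend := hχlim x
    rw [h (Quotient.mk (Filter.productSetoid (𝒰 : Filter ℕ) G) x)] at htend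
    have hcoe : Filter.Tendsto (fun n => ((χ n (x n) : ℂ))) (𝒰 : Filter ℕ)
        (nhds ((1 : Circle) : ℂ)) :=
      (continuous_subtype_val.tendsto _).comp htend
    have hre : Filter.Tendsto (fun n => ((χ n (x n) : ℂ)).re) (𝒰 : Filter ℕ)
        (nhds ((1 : Circle) : ℂ).re) :=
      (Complex.continuous_re.tendsto _).comp hcoe
    have hle : ((1 : Circle) : ℂ).re ≤ 0 := le_of_tendsto hre hxle
    simp at hle
    linarith
  · intro h q
    obtain ⟨x, rfl⟩ := Quotient.exists_rep q
    have htend := hχlim x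
    have htend1 : Filter.Tendsto (fun n => χ n (x n)) (𝒰 : Filter ℕ) (nhds 1) := by
      apply Filter.Tendsto.congr' _ tendsto_const_nhds
      filter_upwards [h] with n hn using (hn (x n)).symm
    exact tendsto_nhds_unique htend htend1
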